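/- Let (X, φ) be a size pair, u < v, and let (v_n) be a strictly decreasing sequence of reals converging to v. Let p ∈ X_v and suppose that for each n there exists q_n ∈ X_u such that p and q_n lie in the same connected component of X_{v_n}. Then there exists q ∈ X_u such that p and q lie in the same connected component of X_v. -/
import Mathlib

open Set

/-- In a Hausdorff space, the intersection of a decreasing sequence of nonempty
compact preconnected sets is preconnected. -/
lemma isPreconnected_iInter_of_antitone {X : Type*} [TopologicalSpace X] [T2Space X]
    {C : ℕ → Set X} (hC : Antitone C) (hcpt : ∀ n, IsCompact (C n))
    (hconn : ∀ n, IsPreconnected (C n)) : IsPreconnected (⋂ n, C n) := by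
  have hcl : ∀ n, IsClosed (C n) := fun n => (hcpt n).isClosed
  have hKcl : IsClosed (⋂ n, C n) := isClosed_iInter hcl
  rw [isPreconnected_iff_subset_of_fully_disjoint_closed hKcl]
  intro t₁ t₂ ht₁ ht₂ hcover hdisj
  set K := ⋂ n, C n with hK
  -- t₁ ∩ K and t₂ ∩ K are disjoint compact sets; separate them by open sets
  have hK1 : IsCompact (t₁ ∩ K) := ((hcpt 0).of_isClosed_subset (ht₁.inter hKcl)
    ((inter_subset_right).trans (iInter_subset _ 0)))
  have hK2 : IsCompact (t₂ ∩ K) := ((hcpt 0).of_isClosed_subset (ht₂.inter hKcl)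
    ((inter_subset_right).trans (iInter_subset _ 0)))
  obtain ⟨U, V, hU, hV, hUs, hVs, hUV⟩ :=
    SeparatedNhds.of_isCompact_isCompact hK1 hK2
      (hdisj.mono inter_subset_left inter_subset_left)
  -- K is covered by U ∪ V
  have hKUV : K ⊆ U ∪ V := by
    intro x hx
    rcases hcover hx with h | h
    · exact Or.inl (hUs ⟨h, hx⟩)
    · exact Or.inr (hVs ⟨h, hx⟩)
  -- some C n is contained in U ∪ V
  have hexists : ∃ n, C n ⊆ U ∪ V := by
    by_contra h
    push_neg at h
    have hne : ∀ n, (C n \ (U ∪ V)).Nonempty := by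
      intro n
      rcases not_subset.mp (h n) with ⟨x, hx, hx'⟩
      exact ⟨x, hx, hx'⟩
    have := IsCompact.nonempty_iInter_of_sequence_nonempty_isCompact_isClosed
      (fun n => C n \ (U ∪ V))
      (fun n => diff_subset_diff_left (hC (Nat.le_succ n)))
      hne
      ((hcpt 0).of_isClosed_subset ((hcl 0).sdiff (hU.union hV)) diff_subset)
      (fun n => (hcl n).sdiff (hU.union hV))
    obtain ⟨x, hx⟩ := this
    rw [mem_iInter] at hx
    have hxK : x ∈ K := mem_iInter.mpr fun n => (hx n).1
    exact (hx 0).2 (hKUV hxK)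
  obtain ⟨n, hn⟩ := hexists
  rcases (hconn n).subset_or_subset hU hV hUV hn with h | h
  · -- C n ⊆ U, so K ∩ t₂ = ∅, so K ⊆ t₁
    left
    intro x hx
    rcases hcover hx with h1 | h2
    · exact h1
    · exact absurd (h ((iInter_subset _ n) hx)) fun hxU =>
        hUV.ne_of_mem hxU (hVs ⟨h2, hx⟩) rfl
  · right
    intro x hx
    rcases hcover hx with h1 | h2
    · exact absurd (h ((iInter_subset _ n) hx)) fun hxV =>
        hUV.ne_of_mem (hUs ⟨h1, hx⟩) hxV rfl
    · exact h2

/-- for a size pair `(X, φ)`, `u < v`, and a strictly decreasing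
sequence `v_n → v`: if `p ∈ X_v` and for every `n` some `q_n ∈ X_u` lies in the same
connected component of `X_{v_n}` as `p`, then some `q ∈ X_u` lies in the same connected
component of `X_v` as `p`. -/
theorem exists_point_in_component_of_limit {X : Type*} [TopologicalSpace X]
    [CompactSpace X] [T2Space X] [LocallyConnectedSpace X] [Nonempty X]
    {φ : X → ℝ} (hφ : Continuous φ) {u v : ℝ} (huv : u < v)
    (vs : ℕ → ℝ) (hanti : StrictAnti vs)
    (hlim : Filter.Tendsto vs Filter.atTop (nhds v))
    {p : X} (hp : φ p ≤ v)
    (hq : ∀ n : ℕ, ∃ q : X, φ q ≤ u ∧ q ∈ connectedComponentIn {x : X | φ x ≤ vs n} p) :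
    ∃ q : X, φ q ≤ u ∧ q ∈ connectedComponentIn {x : X | φ x ≤ v} p := by
  -- v < vs n for every n
  have hv_le : ∀ n, v ≤ vs n := fun n => hanti.antitone.le_of_tendsto hlim n
  set S : ℕ → Set X := fun n => {x : X | φ x ≤ vs n} with hS
  set C : ℕ → Set X := fun n => connectedComponentIn (S n) p with hCdef
  have hpS : ∀ n, p ∈ S n := fun n => le_trans hp (hv_le n)
  have hScl : ∀ n, IsClosed (S n) := fun n => isClosed_le hφ continuous_const
  have hScpt : ∀ n, IsCompact (S n) := fun n => (hScl n).isCompact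
  -- each C n is compact
  have hCcpt : ∀ n, IsCompact (C n) := by
    intro n
    have : CompactSpace (S n) := isCompact_iff_compactSpace.mp (hScpt n)
    rw [hCdef]
    simp only
    rw [connectedComponentIn_eq_image (hpS n)]
    exact (isClosed_connectedComponent.isCompact).image continuous_subtype_val
  have hCanti : Antitone C := by
    apply antitone_nat_of_succ_le
    intro n
    exact connectedComponentIn_mono p (fun x hx => le_trans hx (hanti (Nat.lt_succ_self n)).le)
  have hCconn : ∀ n, IsPreconnected (C n) := fun n => isPreconnected_connectedComponentIn
  -- pick q in the intersection of C n ∩ {φ ≤ u}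
  have hne : ∀ n, (C n ∩ {x : X | φ x ≤ u}).Nonempty := by
    intro n
    obtain ⟨q, hqu, hqC⟩ := hq n
    exact ⟨q, hqC, hqu⟩
  have hucl : IsClosed {x : X | φ x ≤ u} := isClosed_le hφ continuous_const
  obtain ⟨q, hqmem⟩ := IsCompact.nonempty_iInter_of_sequence_nonempty_isCompact_isClosed
    (fun n => C n ∩ {x : X | φ x ≤ u})
    (fun n => inter_subset_inter_left _ (hCanti (Nat.le_succ n)))
    hne
    (((hCcpt 0).inter_right hucl))
    (fun n => ((hCcpt n).isClosed).inter hucl)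
  have hqK : q ∈ ⋂ n, C n := by
    rw [mem_iInter]
    intro n
    exact ((mem_iInter.mp hqmem) n).1
  have hqu : φ q ≤ u := ((mem_iInter.mp hqmem) 0).2
  -- ⋂ C n is preconnected, contains p, and is contained in {φ ≤ v}
  have hKconn : IsPreconnected (⋂ n, C n) :=
    isPreconnected_iInter_of_antitone hCanti hCcpt hCconn
  have hpK : p ∈ ⋂ n, C n := mem_iInter.mpr fun n => mem_connectedComponentIn (hpS n)
  have hKsub : (⋂ n, C n) ⊆ {x : X | φ x ≤ v} := by
    intro x hx
    have hxn : ∀ n, φ x ≤ vs n := fun n =>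
      connectedComponentIn_subset (S n) p ((mem_iInter.mp hx) n)
    exact ge_of_tendsto' hlim hxn
  refine ⟨q, hqu, ?_⟩
  exact hKconn.subset_connectedComponentIn hpK hKsub hqK
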